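/- Let G = GL_{n+1}(ℝ), P_G its subgroup of upper triangular invertible matrices, and H = GL_n(ℝ) embedded in G as block-diagonal matrices diag(h,1), with P_H the upper triangular matrices in H. For 0 ≤ k ≤ n let x_k be the (n+1)×(n+1) permutation matrix with block form [[I_k,0,0],[0,0,I_{n-k}],[0,1,0]]. Then P_H · x_k · P_G ⊆ x_k · P_G for every 0 ≤ k ≤ n, and conversely every coset xP_G in G/P_G satisfying P_H x P_G ⊆ x P_G equals x_k P_G for some 0 ≤ k ≤ n. -/

import Mathlib

open Matrix

/-- The embedding `GL_n(ℝ) → GL_{n+1}(ℝ)`, `h ↦ diag(h,1)`. -/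
def embH (n : ℕ) (h : Matrix (Fin n) (Fin n) ℝ) : Matrix (Fin (n+1)) (Fin (n+1)) ℝ :=
  fun i j =>
    if hi : (i : ℕ) < n then
      if hj : (j : ℕ) < n then h ⟨i, hi⟩ ⟨j, hj⟩ else 0
    else if (j : ℕ) < n then 0 else 1

/-- The permutation matrix `x_k` with block form `[[I_k,0,0],[0,0,I_{n-k}],[0,1,0]]`. -/
def xmat (n k : ℕ) : Matrix (Fin (n+1)) (Fin (n+1)) ℝ :=
  fun i j =>
    if ((i : ℕ) < k ∧ j = i) ∨ (k ≤ (i : ℕ) ∧ (i : ℕ) < n ∧ (j : ℕ) = (i : ℕ) + 1)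
        ∨ ((i : ℕ) = n ∧ (j : ℕ) = k) then 1 else 0

/-- Upper triangular matrices. -/
def UT (m : ℕ) (A : Matrix (Fin m) (Fin m) ℝ) : Prop := A.BlockTriangular id

def sigv (n k i : ℕ) : ℕ := if i < k then i else if i < n then i + 1 else k

def sivv (n k a : ℕ) : ℕ := if a < k then a else if a = k then n else a - 1

lemma sigv_le {n k : ℕ} (hk : k ≤ n) {i : ℕ} (hi : i ≤ n) : sigv n k i ≤ n := by
  unfold sigv; split_ifs <;> omega

lemma sigv_inj {n k : ℕ} (hk : k ≤ n) {a b : ℕ} (ha : a ≤ n) (hb : b ≤ n)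
    (h : sigv n k a = sigv n k b) : a = b := by
  unfold sigv at h; split_ifs at h <;> omega

lemma sivv_le {n k : ℕ} (hk : k ≤ n) {a : ℕ} (ha : a ≤ n) : sivv n k a ≤ n := by
  unfold sivv; split_ifs <;> omega

lemma sigv_sivv {n k : ℕ} (hk : k ≤ n) {a : ℕ} (ha : a ≤ n) : sigv n k (sivv n k a) = a := by
  unfold sigv sivv; split_ifs <;> omega

lemma xmat_cond_iff {n k : ℕ} (hk : k ≤ n) (i j : Fin (n+1)) :
    (((i : ℕ) < k ∧ j = i) ∨ (k ≤ (i : ℕ) ∧ (i : ℕ) < n ∧ (j : ℕ) = (i : ℕ) + 1)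
        ∨ ((i : ℕ) = n ∧ (j : ℕ) = k)) ↔ (j : ℕ) = sigv n k (i : ℕ) := by
  have hi := i.isLt
  have hj := j.isLt
  constructor
  · rintro (⟨h1, rfl⟩ | ⟨h1, h2, h3⟩ | ⟨h1, h2⟩) <;> (unfold sigv; split_ifs <;> omega)
  · intro h
    unfold sigv at h
    split_ifs at h with c1 c2
    · exact Or.inl ⟨c1, Fin.ext h⟩
    · exact Or.inr (Or.inl ⟨by omega, c2, h⟩)
    · exact Or.inr (Or.inr ⟨by omega, h⟩)

lemma xmat_apply {n k : ℕ} (hk : k ≤ n) (i j : Fin (n+1)) :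
    xmat n k i j = if (j : ℕ) = sigv n k (i : ℕ) then 1 else 0 := by
  by_cases h : (j : ℕ) = sigv n k (i : ℕ)
  · rw [if_pos h]; unfold xmat; rw [if_pos ((xmat_cond_iff hk i j).mpr h)]
  · rw [if_neg h]; unfold xmat; rw [if_neg (fun hc => h ((xmat_cond_iff hk i j).mp hc))]

lemma xmat_mul_transpose {n k : ℕ} (hk : k ≤ n) : xmat n k * (xmat n k)ᵀ = 1 := by
  ext a b
  have ha : (a : ℕ) ≤ n := by omega
  have hb : (b : ℕ) ≤ n := by omega
  set La : Fin (n+1) := ⟨sigv n k a, by have := sigv_le hk ha; omega⟩ with hLa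
  rw [Matrix.mul_apply]
  simp only [Matrix.transpose_apply, xmat_apply hk]
  have h1 : ∀ l : Fin (n+1),
      (if (l : ℕ) = sigv n k a then (1:ℝ) else 0) * (if (l : ℕ) = sigv n k b then 1 else 0)
      = if l = La then (if (l : ℕ) = sigv n k b then (1:ℝ) else 0) else 0 := by
    intro l
    by_cases h : l = La
    · rw [if_pos h, if_pos (by rw [h]), one_mul]
    · rw [if_neg h, if_neg (fun hh => h (Fin.ext hh)), zero_mul]
  rw [Finset.sum_congr rfl fun l _ => h1 l, Finset.sum_ite_eq', if_pos (Finset.mem_univ _)]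
  by_cases hab : a = b
  · subst hab
    rw [if_pos rfl, Matrix.one_apply_eq]
  · have hs : ¬ ((La : ℕ) = sigv n k b) := by
      intro h; exact hab (Fin.ext (sigv_inj hk ha hb h))
    rw [if_neg hs, Matrix.one_apply_ne (fun h => hab h)]

lemma transpose_mul_xmat {n k : ℕ} (hk : k ≤ n) : (xmat n k)ᵀ * xmat n k = 1 :=
  mul_eq_one_comm.mp (xmat_mul_transpose hk)

lemma isUnit_det_xmat {n k : ℕ} (hk : k ≤ n) : IsUnit (xmat n k).det :=
  Matrix.isUnit_det_of_right_inverse (xmat_mul_transpose hk)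

lemma transpose_xmat_mul_apply {n k : ℕ} (hk : k ≤ n) (A : Matrix (Fin (n+1)) (Fin (n+1)) ℝ)
    (a m : Fin (n+1)) :
    ((xmat n k)ᵀ * A) a m
      = A ⟨sivv n k a, by have := sivv_le hk (show (a:ℕ) ≤ n by omega); omega⟩ m := by
  have ha : (a : ℕ) ≤ n := by omega
  set L : Fin (n+1) := ⟨sivv n k a, by have := sivv_le hk ha; omega⟩ with hL
  rw [Matrix.mul_apply]
  simp only [Matrix.transpose_apply, xmat_apply hk]
  have h1 : ∀ l : Fin (n+1),
      (if (a : ℕ) = sigv n k l then (1:ℝ) else 0) * A l m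
      = if l = L then A l m else 0 := by
    intro l
    have hl : (l : ℕ) ≤ n := by omega
    by_cases h : (a : ℕ) = sigv n k l
    · have hlL : l = L := by
        apply Fin.ext
        exact sigv_inj hk hl (sivv_le hk ha) (by rw [sigv_sivv hk ha, ← h])
      rw [if_pos h, if_pos hlL, one_mul]
    · have hlL : l ≠ L := by
        intro hh; apply h
        rw [hh]; exact (sigv_sivv hk ha).symm
      rw [if_neg h, if_neg hlL, zero_mul]
  rw [Finset.sum_congr rfl fun l _ => h1 l, Finset.sum_ite_eq', if_pos (Finset.mem_univ _)]

lemma mul_xmat_apply {n k : ℕ} (hk : k ≤ n) (A : Matrix (Fin (n+1)) (Fin (n+1)) ℝ)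
    (a b : Fin (n+1)) :
    (A * xmat n k) a b
      = A a ⟨sivv n k b, by have := sivv_le hk (show (b:ℕ) ≤ n by omega); omega⟩ := by
  have hb : (b : ℕ) ≤ n := by omega
  set L : Fin (n+1) := ⟨sivv n k b, by have := sivv_le hk hb; omega⟩ with hL
  rw [Matrix.mul_apply]
  simp only [xmat_apply hk]
  have h1 : ∀ l : Fin (n+1),
      A a l * (if (b : ℕ) = sigv n k l then (1:ℝ) else 0)
      = if l = L then A a l else 0 := by
    intro l
    have hl : (l : ℕ) ≤ n := by omega
    by_cases h : (b : ℕ) = sigv n k l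
    · have hlL : l = L := by
        apply Fin.ext
        exact sigv_inj hk hl (sivv_le hk hb) (by rw [sigv_sivv hk hb, ← h])
      rw [if_pos h, if_pos hlL, mul_one]
    · have hlL : l ≠ L := by
        intro hh; apply h
        rw [hh]; exact (sigv_sivv hk hb).symm
      rw [if_neg h, if_neg hlL, mul_zero]
  rw [Finset.sum_congr rfl fun l _ => h1 l, Finset.sum_ite_eq', if_pos (Finset.mem_univ _)]

lemma embH_cs_cs {n : ℕ} (p : Matrix (Fin n) (Fin n) ℝ) (i j : Fin n) :
    embH n p i.castSucc j.castSucc = p i j := by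
  unfold embH
  rw [dif_pos (by simp : ((i.castSucc : Fin (n+1)) : ℕ) < n)]
  rw [dif_pos (by simp : ((j.castSucc : Fin (n+1)) : ℕ) < n)]
  congr 1 <;> exact Fin.ext (by simp)

lemma embH_cs_last {n : ℕ} (p : Matrix (Fin n) (Fin n) ℝ) (i : Fin n) :
    embH n p i.castSucc (Fin.last n) = 0 := by
  unfold embH
  rw [dif_pos (by simp), dif_neg (by simp)]

lemma embH_last_cs {n : ℕ} (p : Matrix (Fin n) (Fin n) ℝ) (j : Fin n) :
    embH n p (Fin.last n) j.castSucc = 0 := by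
  unfold embH
  rw [dif_neg (by simp), if_pos (by simp)]

lemma embH_last_last {n : ℕ} (p : Matrix (Fin n) (Fin n) ℝ) :
    embH n p (Fin.last n) (Fin.last n) = 1 := by
  unfold embH
  rw [dif_neg (by simp), if_neg (by simp)]

lemma embH_one {n : ℕ} : embH n 1 = 1 := by
  ext i j
  induction i using Fin.lastCases with
  | last =>
    induction j using Fin.lastCases with
    | last => rw [embH_last_last, Matrix.one_apply_eq]
    | cast j => rw [embH_last_cs, Matrix.one_apply_ne (Fin.castSucc_lt_last j).ne']
  | cast i =>
    induction j using Fin.lastCases with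
    | last => rw [embH_cs_last, Matrix.one_apply_ne (Fin.castSucc_lt_last i).ne]
    | cast j =>
      rw [embH_cs_cs]
      by_cases h : i = j
      · subst h; rw [Matrix.one_apply_eq, Matrix.one_apply_eq]
      · rw [Matrix.one_apply_ne h,
          Matrix.one_apply_ne (fun hh => h (Fin.castSucc_injective n hh))]

lemma embH_mul {n : ℕ} (p q : Matrix (Fin n) (Fin n) ℝ) :
    embH n (p * q) = embH n p * embH n q := by
  ext i j
  rw [Matrix.mul_apply, Fin.sum_univ_castSucc]
  induction i using Fin.lastCases with
  | last =>
    induction j using Fin.lastCases with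
    | last => simp [embH_last_last, embH_last_cs]
    | cast j => simp [embH_last_last, embH_last_cs]
  | cast i =>
    induction j using Fin.lastCases with
    | last => simp [embH_cs_last, embH_cs_cs]
    | cast j => simp [embH_cs_cs, embH_cs_last, embH_last_cs, Matrix.mul_apply]

lemma embH_isUnit_det {n : ℕ} (p : Matrix (Fin n) (Fin n) ℝ) (hp : IsUnit p.det) :
    IsUnit (embH n p).det := by
  apply Matrix.isUnit_det_of_right_inverse (B := embH n p⁻¹)
  rw [← embH_mul, Matrix.mul_nonsing_inv p hp, embH_one]

lemma embH_UT {n : ℕ} (p : Matrix (Fin n) (Fin n) ℝ) (hp : UT n p) : UT (n+1) (embH n p) := by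
  intro i j hij
  simp only [id] at hij
  induction i using Fin.lastCases with
  | last =>
    induction j using Fin.lastCases with
    | last => exact absurd hij (lt_irrefl _)
    | cast j => exact embH_last_cs p j
  | cast i =>
    induction j using Fin.lastCases with
    | last => exact absurd hij (by simp [Fin.lt_def])
    | cast j =>
      rw [embH_cs_cs]
      exact hp (Fin.castSucc_lt_castSucc_iff.mp hij)

/-- the conjugated matrix `xmatᵀ * embH p * xmat` is upper triangular -/
lemma conj_UT {n k : ℕ} (hk : k ≤ n) (p : Matrix (Fin n) (Fin n) ℝ) (hp : UT n p) :
    UT (n+1) ((xmat n k)ᵀ * embH n p * xmat n k) := by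
  intro a b hab
  simp only [id] at hab
  rw [mul_xmat_apply hk, transpose_xmat_mul_apply hk]
  have ha : (a : ℕ) ≤ n := by omega
  have hb : (b : ℕ) ≤ n := by omega
  by_cases hcase : sivv n k (b : ℕ) < sivv n k (a : ℕ)
  · exact embH_UT p hp (show (Fin.mk (sivv n k (b:ℕ)) _ : Fin (n+1)) < ⟨sivv n k (a:ℕ), _⟩ from hcase)
  · have hba : (b : ℕ) < (a : ℕ) := hab
    have h1 : sivv n k (a : ℕ) < n ∧ sivv n k (b : ℕ) = n := by
      unfold sivv at hcase ⊢
      split_ifs at hcase ⊢ <;> omega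
    exact (congrArg₂ (embH n p)
      (Fin.ext rfl :
        (⟨sivv n k (a:ℕ), by have := sivv_le hk ha; omega⟩ : Fin (n+1))
          = (⟨sivv n k (a : ℕ), h1.1⟩ : Fin n).castSucc)
      (Fin.ext h1.2)).trans (embH_cs_last p _)

lemma part1 {n : ℕ} (k : ℕ) (hk : k ≤ n) (p : Matrix (Fin n) (Fin n) ℝ)
    (q : Matrix (Fin (n+1)) (Fin (n+1)) ℝ)
    (hpUT : UT n p) (hpD : IsUnit p.det) (hqUT : UT (n+1) q) (hqD : IsUnit q.det) :
    ∃ r : Matrix (Fin (n+1)) (Fin (n+1)) ℝ, UT (n+1) r ∧ IsUnit r.det ∧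
      embH n p * xmat n k * q = xmat n k * r := by
  refine ⟨(xmat n k)ᵀ * embH n p * xmat n k * q, ?_, ?_, ?_⟩
  · exact Matrix.BlockTriangular.mul (conj_UT hk p hpUT) hqUT
  · rw [Matrix.det_mul, Matrix.det_mul, Matrix.det_mul, Matrix.det_transpose]
    exact (((isUnit_det_xmat hk).mul (embH_isUnit_det p hpD)).mul (isUnit_det_xmat hk)).mul hqD
  · rw [← Matrix.mul_assoc, ← Matrix.mul_assoc, ← Matrix.mul_assoc,
      xmat_mul_transpose hk, Matrix.one_mul]

lemma std_apply {m : ℕ} (i j a b : Fin m) (c : ℝ) :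
    Matrix.single i j c a b = if i = a ∧ j = b then c else 0 := by
  rw [Matrix.single]; rfl

lemma mul_std_mul {m : ℕ} (M N : Matrix (Fin m) (Fin m) ℝ) (i j a b : Fin m) :
    (M * Matrix.single i j (1:ℝ) * N) a b = M a i * N j b := by
  have h1 : ∀ l : Fin m, (M * Matrix.single i j (1:ℝ)) a l = if l = j then M a i else 0 := by
    intro l
    rw [Matrix.mul_apply]
    have h2 : ∀ c : Fin m, M a c * Matrix.single i j (1:ℝ) c l
        = if c = i then (if l = j then M a i else 0) else 0 := by
      intro c
      rw [std_apply]
      by_cases hc : c = i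
      · subst hc
        by_cases hl : l = j
        · subst hl; rw [if_pos ⟨rfl, rfl⟩, if_pos rfl, if_pos rfl, mul_one]
        · rw [if_neg (fun h => hl h.2.symm), if_pos rfl, if_neg hl, mul_zero]
      · rw [if_neg (fun h => hc h.1.symm), if_neg hc, mul_zero]
    rw [Finset.sum_congr rfl fun c _ => h2 c, Finset.sum_ite_eq', if_pos (Finset.mem_univ _)]
  rw [Matrix.mul_apply, Finset.sum_congr rfl fun l _ => by rw [h1 l]]
  have h3 : ∀ l, (if l = j then M a i else 0) * N l b = if l = j then M a i * N j b else 0 := by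
    intro l
    by_cases h : l = j
    · subst h; rw [if_pos rfl, if_pos rfl]
    · rw [if_neg h, if_neg h, zero_mul]
  rw [Finset.sum_congr rfl fun l _ => h3 l, Finset.sum_ite_eq', if_pos (Finset.mem_univ _)]

lemma embH_one_add_std {n : ℕ} (i j : Fin n) :
    embH n (1 + Matrix.single i j (1:ℝ))
      = 1 + Matrix.single i.castSucc j.castSucc (1:ℝ) := by
  ext a b
  rw [Matrix.add_apply]
  induction a using Fin.lastCases with
  | last =>
    induction b using Fin.lastCases with
    | last =>
      rw [embH_last_last, Matrix.one_apply_eq, std_apply,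
        if_neg (fun h => (Fin.castSucc_lt_last i).ne h.1), add_zero]
    | cast b =>
      rw [embH_last_cs, Matrix.one_apply_ne (Fin.castSucc_lt_last b).ne', std_apply,
        if_neg (fun h => (Fin.castSucc_lt_last i).ne h.1), add_zero]
  | cast a =>
    induction b using Fin.lastCases with
    | last =>
      rw [embH_cs_last, Matrix.one_apply_ne (Fin.castSucc_lt_last a).ne, std_apply,
        if_neg (fun h => (Fin.castSucc_lt_last j).ne h.2), add_zero]
    | cast b =>
      rw [embH_cs_cs, Matrix.add_apply, std_apply, std_apply]
      congr 1
      · by_cases h : a = b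
        · subst h; rw [Matrix.one_apply_eq, Matrix.one_apply_eq]
        · rw [Matrix.one_apply_ne h,
            Matrix.one_apply_ne (fun hh => h (Fin.castSucc_injective n hh))]
      · by_cases h : i = a ∧ j = b
        · rw [if_pos h, if_pos ⟨congrArg Fin.castSucc h.1, congrArg Fin.castSucc h.2⟩]
        · rw [if_neg h, if_neg (fun hh => h ⟨Fin.castSucc_injective n hh.1,
            Fin.castSucc_injective n hh.2⟩)]

lemma std_UT {n : ℕ} (i j : Fin n) (hij : i ≤ j) : UT n (1 + Matrix.single i j (1:ℝ)) := by
  apply Matrix.blockTriangular_one.add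
  intro a b hab
  rw [std_apply]
  refine if_neg (fun h => ?_)
  rcases h with ⟨rfl, rfl⟩
  exact absurd hij (not_le.mpr hab)

lemma std_det {n : ℕ} (i j : Fin n) (hij : i ≤ j) :
    IsUnit (1 + Matrix.single i j (1:ℝ)).det := by
  rw [isUnit_iff_ne_zero, Matrix.det_of_upperTriangular (std_UT i j hij)]
  rw [Finset.prod_ne_zero_iff]
  intro l _
  rw [Matrix.add_apply, Matrix.one_apply_eq, std_apply]
  split_ifs <;> norm_num

lemma keyH1 {n : ℕ} (x : Matrix (Fin (n+1)) (Fin (n+1)) ℝ) (hx : IsUnit x.det)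
    (hyp : ∀ (p : Matrix (Fin n) (Fin n) ℝ) (q : Matrix (Fin (n+1)) (Fin (n+1)) ℝ),
      UT n p → IsUnit p.det → UT (n+1) q → IsUnit q.det →
      ∃ r : Matrix (Fin (n+1)) (Fin (n+1)) ℝ, UT (n+1) r ∧ IsUnit r.det ∧
        embH n p * x * q = x * r)
    (i j : Fin n) (hij : i ≤ j) (a b : Fin (n+1)) (hba : (b:ℕ) < (a:ℕ)) :
    x⁻¹ a i.castSucc * x j.castSucc b = 0 := by
  obtain ⟨r, hrUT, -, heq⟩ := hyp (1 + Matrix.single i j (1:ℝ)) 1 (std_UT i j hij)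
    (std_det i j hij) Matrix.blockTriangular_one (by rw [Matrix.det_one]; exact isUnit_one)
  rw [Matrix.mul_one, embH_one_add_std] at heq
  have hwx : x⁻¹ * x = 1 := Matrix.nonsing_inv_mul x hx
  have hr : x⁻¹ * Matrix.single i.castSucc j.castSucc (1:ℝ) * x = r - 1 := by
    have h2 : x⁻¹ * ((1 + Matrix.single i.castSucc j.castSucc (1:ℝ)) * x) = x⁻¹ * (x * r) := by
      rw [heq]
    rw [add_mul, one_mul, Matrix.mul_add, ← Matrix.mul_assoc, ← Matrix.mul_assoc, hwx,
      Matrix.one_mul] at h2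
    rw [← h2]
    abel
  have hUT : UT (n+1) (x⁻¹ * Matrix.single i.castSucc j.castSucc (1:ℝ) * x) := by
    rw [hr]; exact hrUT.sub Matrix.blockTriangular_one
  have := hUT (show (id b) < id a from hba)
  rwa [mul_std_mul] at this

lemma part2 {n : ℕ} (x : Matrix (Fin (n+1)) (Fin (n+1)) ℝ) (hx : IsUnit x.det)
    (hyp : ∀ (p : Matrix (Fin n) (Fin n) ℝ) (q : Matrix (Fin (n+1)) (Fin (n+1)) ℝ),
      UT n p → IsUnit p.det → UT (n+1) q → IsUnit q.det →
      ∃ r : Matrix (Fin (n+1)) (Fin (n+1)) ℝ, UT (n+1) r ∧ IsUnit r.det ∧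
        embH n p * x * q = x * r) :
    ∃ k ≤ n, ∃ r : Matrix (Fin (n+1)) (Fin (n+1)) ℝ, UT (n+1) r ∧ IsUnit r.det ∧
      x = xmat n k * r := by
  classical
  have hxw : x * x⁻¹ = 1 := Matrix.mul_nonsing_inv x hx
  have H1 := keyH1 x hx hyp
  have stepA : ∀ i : Fin n, ∃ m : Fin (n+1),
      (x⁻¹ m i.castSucc ≠ 0 ∧ x i.castSucc m ≠ 0) ∧
      (∀ b : Fin (n+1), (b:ℕ) < (m:ℕ) → x i.castSucc b = 0) ∧
      (∀ a : Fin (n+1), (m:ℕ) < (a:ℕ) → x⁻¹ a i.castSucc = 0) := by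
    intro i
    have h1 : ∑ l, x i.castSucc l * x⁻¹ l i.castSucc = 1 := by
      rw [← Matrix.mul_apply, hxw, Matrix.one_apply_eq]
    obtain ⟨m, -, hm⟩ : ∃ m ∈ Finset.univ, x i.castSucc m * x⁻¹ m i.castSucc ≠ 0 :=
      Finset.exists_ne_zero_of_sum_ne_zero (by rw [h1]; exact one_ne_zero)
    have hxm : x i.castSucc m ≠ 0 := fun h => hm (by rw [h, zero_mul])
    have hwm : x⁻¹ m i.castSucc ≠ 0 := fun h => hm (by rw [h, mul_zero])
    refine ⟨m, ⟨hwm, hxm⟩, ?_, ?_⟩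
    · intro b hb
      exact (mul_eq_zero.mp (H1 i i le_rfl m b hb)).resolve_left hwm
    · intro a ha
      exact (mul_eq_zero.mp (H1 i i le_rfl a m ha)).resolve_right hxm
  choose t htne htx htw using stepA
  have mono : ∀ i j : Fin n, i < j → (t i : ℕ) < (t j : ℕ) := by
    intro i j hij
    have hle : (t i : ℕ) ≤ (t j : ℕ) := by
      by_contra hlt
      exact absurd (H1 i j (le_of_lt hij) (t i) (t j) (by omega))
        (mul_ne_zero (htne i).1 (htne j).2)
    rcases lt_or_eq_of_le hle with h | h
    · exact h
    · exfalso
      have hne : j.castSucc ≠ i.castSucc := fun hh =>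
        absurd (Fin.castSucc_injective n hh) (ne_of_gt hij)
      have hz : ∑ l, x j.castSucc l * x⁻¹ l i.castSucc = 0 := by
        rw [← Matrix.mul_apply, hxw, Matrix.one_apply_ne hne]
      have hsingle : ∑ l, x j.castSucc l * x⁻¹ l i.castSucc
          = x j.castSucc (t j) * x⁻¹ (t j) i.castSucc := by
        apply Finset.sum_eq_single
        · intro l _ hl
          rcases lt_or_gt_of_ne (fun hv => hl (Fin.ext hv) : (l:ℕ) ≠ (t j : ℕ)) with h' | h'
          · rw [htx j l h', zero_mul]
          · rw [htw i l (by omega), mul_zero]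
        · intro habs; exact absurd (Finset.mem_univ _) habs
      rw [hsingle] at hz
      have hfe : t j = t i := Fin.ext h.symm
      exact absurd hz (mul_ne_zero (htne j).2 (hfe ▸ (htne i).1))
  have lb : ∀ m : ℕ, ∀ i : Fin n, (i:ℕ) = m → m ≤ (t i : ℕ) := by
    intro m
    induction m with
    | zero => intro i _; exact Nat.zero_le _
    | succ m ih =>
      intro i him
      have hm : m < n := by omega
      have h1 := mono ⟨m, hm⟩ i (Fin.lt_def.mpr (show m < (i:ℕ) by omega))
      have h2 := ih ⟨m, hm⟩ rfl
      omega
  obtain ⟨k, hkn, hk1, hk2⟩ :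
      ∃ k, k ≤ n ∧ (∀ (m : ℕ) (hm : m < n), m < k → (t ⟨m, hm⟩ : ℕ) = m) ∧
        (∀ (m : ℕ) (hm : m < n), k ≤ m → m + 1 ≤ (t ⟨m, hm⟩ : ℕ)) := by
    by_cases hex : ∃ m : ℕ, ∃ hm : m < n, (t ⟨m, hm⟩ : ℕ) ≠ m
    · set k0 := Nat.find hex with hk0def
      obtain ⟨hk0n, hk0ne⟩ := Nat.find_spec hex
      have step : ∀ m : ℕ, ∀ hm : m < n, k0 ≤ m → m + 1 ≤ (t ⟨m, hm⟩ : ℕ) := by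
        intro m
        induction m using Nat.strong_induction_on with
        | _ m ih =>
          intro hm hkm
          rcases Nat.eq_or_lt_of_le hkm with heq | hlt
          · have h1 := lb m ⟨m, hm⟩ rfl
            have h2 : (t ⟨m, hm⟩ : ℕ) ≠ m := by
              subst heq; exact hk0ne
            omega
          · have hm1 : m - 1 < n := by omega
            have ih1 := ih (m - 1) (by omega) (by omega) (by omega)
            have hmono := mono ⟨m - 1, by omega⟩ ⟨m, hm⟩
              (Fin.lt_def.mpr (show m - 1 < m by omega))
            omega
      refine ⟨k0, by omega, ?_, step⟩
      intro m hm hmk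
      by_contra hne
      exact Nat.find_min hex hmk ⟨hm, hne⟩
    · refine ⟨n, le_refl n, ?_, ?_⟩
      · intro m hm _
        by_contra hne
        exact hex ⟨m, hm, hne⟩
      · intro m hm hnm; omega
  have rowN : ∀ c : ℕ, ∀ b : Fin (n+1), (b:ℕ) = c → c < k → x (Fin.last n) b = 0 := by
    intro c
    induction c using Nat.strong_induction_on with
    | _ c ih =>
      intro b hbc hck
      have hbn : (b:ℕ) < n := by omega
      set ib : Fin n := ⟨(b:ℕ), hbn⟩ with hib
      have htb : (t ib : ℕ) = (b:ℕ) := hk1 (b:ℕ) hbn (by omega)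
      have hne : Fin.last n ≠ ib.castSucc := by
        intro h
        have := congrArg Fin.val h
        simp [Fin.val_last] at this
        omega
      have hz : ∑ l, x (Fin.last n) l * x⁻¹ l ib.castSucc = 0 := by
        rw [← Matrix.mul_apply, hxw, Matrix.one_apply_ne hne]
      have hsingle : ∑ l, x (Fin.last n) l * x⁻¹ l ib.castSucc
          = x (Fin.last n) b * x⁻¹ b ib.castSucc := by
        apply Finset.sum_eq_single
        · intro l _ hl
          rcases lt_or_gt_of_ne (fun hv => hl (Fin.ext hv) : (l:ℕ) ≠ (b:ℕ)) with h' | h'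
          · rw [ih (l:ℕ) (by omega) l rfl (by omega), zero_mul]
          · rw [htw ib l (by omega), mul_zero]
        · intro habs; exact absurd (Finset.mem_univ _) habs
      rw [hsingle] at hz
      have hwb : x⁻¹ b ib.castSucc ≠ 0 := by
        have h0 := (htne ib).1
        have hfe : t ib = b := Fin.ext (by rw [htb])
        rwa [hfe] at h0
      exact (mul_eq_zero.mp hz).resolve_right hwb
  have V : ∀ i b : Fin (n+1), (b:ℕ) < sigv n k (i:ℕ) → x i b = 0 := by
    intro i b hb
    by_cases hi : (i:ℕ) < n
    · have hics : i = (⟨(i:ℕ), hi⟩ : Fin n).castSucc := Fin.ext rfl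
      by_cases hik : (i:ℕ) < k
      · have ht' : (t ⟨(i:ℕ), hi⟩ : ℕ) = (i:ℕ) := hk1 (i:ℕ) hi hik
        rw [hics]
        exact htx _ b (by unfold sigv at hb; split_ifs at hb <;> omega)
      · have ht' : (i:ℕ) + 1 ≤ (t ⟨(i:ℕ), hi⟩ : ℕ) := hk2 (i:ℕ) hi (by omega)
        rw [hics]
        exact htx _ b (by unfold sigv at hb; split_ifs at hb <;> omega)
    · have hin : i = Fin.last n := Fin.ext (by simp [Fin.val_last]; omega)
      rw [hin]
      exact rowN (b:ℕ) b rfl (by unfold sigv at hb; split_ifs at hb <;> omega)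
  refine ⟨k, hkn, (xmat n k)ᵀ * x, ?_, ?_, ?_⟩
  · intro a b hab
    rw [transpose_xmat_mul_apply hkn]
    apply V
    rw [sigv_sivv hkn (show (a:ℕ) ≤ n by omega)]
    exact hab
  · rw [Matrix.det_mul, Matrix.det_transpose]
    exact (isUnit_det_xmat hkn).mul hx
  · rw [← Matrix.mul_assoc, xmat_mul_transpose hkn, Matrix.one_mul]

theorem stmt0 (n : ℕ) :
    (∀ k ≤ n, ∀ (p : Matrix (Fin n) (Fin n) ℝ) (q : Matrix (Fin (n+1)) (Fin (n+1)) ℝ),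
      UT n p → IsUnit p.det → UT (n+1) q → IsUnit q.det →
      ∃ r : Matrix (Fin (n+1)) (Fin (n+1)) ℝ, UT (n+1) r ∧ IsUnit r.det ∧
        embH n p * xmat n k * q = xmat n k * r)
    ∧
    (∀ x : Matrix (Fin (n+1)) (Fin (n+1)) ℝ, IsUnit x.det →
      (∀ (p : Matrix (Fin n) (Fin n) ℝ) (q : Matrix (Fin (n+1)) (Fin (n+1)) ℝ),
        UT n p → IsUnit p.det → UT (n+1) q → IsUnit q.det →
        ∃ r : Matrix (Fin (n+1)) (Fin (n+1)) ℝ, UT (n+1) r ∧ IsUnit r.det ∧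
          embH n p * x * q = x * r) →
      ∃ k ≤ n, ∃ r : Matrix (Fin (n+1)) (Fin (n+1)) ℝ, UT (n+1) r ∧ IsUnit r.det ∧
        x = xmat n k * r) := by
  constructor
  · intro k hk p q hpUT hpD hqUT hqD
    exact part1 k hk p q hpUT hpD hqUT hqD
  · intro x hx hyp
    exact part2 x hx hyp
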